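/- arXiv:2602.16570 — 2 statements merged into one kernel-verified Lean document; each statement's English description precedes it below -/
import Mathlib

section
/- Let p be a probability density on ℝ^d, v ∈ ℝ^d, and define the tilted density p_v(x) ∝ p(x)·exp(⟨x,v⟩). For σ ∈ (0,1), let q_σ denote the law of √(1−σ²)·X + σ·Z where X ∼ q and Z ∼ N(0, I_d). Then for all x ∈ ℝ^d, the score of the noised tilted distribution satisfies ∇ log (p_v)_σ(x) = v/√(1−σ²) + ∇ log p_σ(x + σ²·v/√(1−σ²)). -/
open MeasureTheory
open scoped RealInnerProductSpace

set_option synthInstance.maxHeartbeats 1000000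
set_option maxHeartbeats 1000000

/-- The linearly tilted density `p(·;v) ∝ p(·) exp⟨·,v⟩`. -/
noncomputable def tilt (d : ℕ) (p : EuclideanSpace ℝ (Fin d) → ℝ)
    (v : EuclideanSpace ℝ (Fin d)) (x : EuclideanSpace ℝ (Fin d)) : ℝ :=
  p x * Real.exp ⟪x, v⟫ / ∫ y, p y * Real.exp ⟪y, v⟫

/-- The density of `√(1−σ²)·X + σ·Z` where `X ∼ q` and `Z ∼ N(0, I_d)`:
`q_σ(x) = (2πσ²)^{−d/2} t^{−d} ∫ q(t⁻¹ y) exp(−‖y−x‖²/(2σ²)) dy`, `t = √(1−σ²)`. -/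
noncomputable def noised (d : ℕ) (q : EuclideanSpace ℝ (Fin d) → ℝ) (σ : ℝ)
    (x : EuclideanSpace ℝ (Fin d)) : ℝ :=
  (2 * Real.pi * σ ^ 2) ^ (-(d : ℝ) / 2) * Real.sqrt (1 - σ ^ 2) ^ (-(d : ℝ)) *
    ∫ y, q ((Real.sqrt (1 - σ ^ 2))⁻¹ • y) * Real.exp (-‖y - x‖ ^ 2 / (2 * σ ^ 2))

variable {d : ℕ}


lemma my_gauss_le {σ u : ℝ} (hσ : 0 < σ) (hu : 0 ≤ u) :
    u * Real.exp (-u ^ 2 / (2 * σ ^ 2)) ≤ σ := by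
  rw [neg_div, Real.exp_neg]
  have hw : (0:ℝ) < Real.exp (u ^ 2 / (2 * σ ^ 2)) := Real.exp_pos _
  rw [mul_inv_le_iff₀ hw]
  have h := Real.add_one_le_exp (u ^ 2 / (2 * σ ^ 2))
  have h2 : σ * (u ^ 2 / (2 * σ ^ 2) + 1) ≤ σ * Real.exp (u ^ 2 / (2 * σ ^ 2)) :=
    mul_le_mul_of_nonneg_left h hσ.le
  have h3 : u ≤ σ * (u ^ 2 / (2 * σ ^ 2) + 1) := by
    rw [mul_add, mul_one]
    have hs : σ * (u ^ 2 / (2 * σ ^ 2)) = u ^ 2 / (2 * σ) := by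
      field_simp
    rw [hs]
    have h5 : u ^ 2 / (2 * σ) + σ = (u ^ 2 + 2 * σ ^ 2) / (2 * σ) := by
      field_simp
    rw [h5, le_div_iff₀ (by positivity : (0:ℝ) < 2 * σ)]
    nlinarith [sq_nonneg (u - σ)]
  linarith

lemma my_integrable (q : EuclideanSpace ℝ (Fin d) → ℝ) (hq : Integrable q)
    {t : ℝ} (ht : t ≠ 0) (σ : ℝ) (x : EuclideanSpace ℝ (Fin d)) :
    Integrable (fun y => q (t⁻¹ • y) * Real.exp (-‖y - x‖ ^ 2 / (2 * σ ^ 2))) := by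
  have h1 : Integrable (fun y : EuclideanSpace ℝ (Fin d) => q (t⁻¹ • y)) :=
    (integrable_comp_smul_iff volume q (inv_ne_zero ht)).2 hq
  have hcont : Continuous fun y : EuclideanSpace ℝ (Fin d) =>
      Real.exp (-‖y - x‖ ^ 2 / (2 * σ ^ 2)) := by fun_prop
  have hb : ∃ C, ∀ y : EuclideanSpace ℝ (Fin d),
      ‖Real.exp (-‖y - x‖ ^ 2 / (2 * σ ^ 2))‖ ≤ C := by
    refine ⟨1, fun y => ?_⟩
    rw [Real.norm_eq_abs, abs_of_pos (Real.exp_pos _)]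
    apply Real.exp_le_one_iff.2
    apply div_nonpos_of_nonpos_of_nonneg
    · simp [sq_nonneg]
    · positivity
  exact (Integrable.bdd_mul h1 hcont.aestronglyMeasurable (Filter.Eventually.of_forall hb.choose_spec)).congr
    (Filter.Eventually.of_forall fun y => mul_comm _ _)

lemma my_pos (q : EuclideanSpace ℝ (Fin d) → ℝ) (hq_nonneg : ∀ y, 0 ≤ q y)
    (hq : Integrable q) (hne : ¬ q =ᵐ[volume] 0)
    {t : ℝ} (ht : t ≠ 0) (σ : ℝ) (x : EuclideanSpace ℝ (Fin d)) :
    0 < ∫ y, q (t⁻¹ • y) * Real.exp (-‖y - x‖ ^ 2 / (2 * σ ^ 2)) := by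
  set f := fun y : EuclideanSpace ℝ (Fin d) =>
    q (t⁻¹ • y) * Real.exp (-‖y - x‖ ^ 2 / (2 * σ ^ 2)) with hf
  have hf_nonneg : 0 ≤ f := fun y => mul_nonneg (hq_nonneg _) (Real.exp_pos _).le
  have hf_int : Integrable f := my_integrable q hq ht σ x
  rw [integral_pos_iff_support_of_nonneg hf_nonneg hf_int]
  have hsupp : Function.support f = (t⁻¹ • ·) ⁻¹' Function.support q := by
    ext y
    simp [hf, Function.mem_support, mul_ne_zero_iff, Real.exp_ne_zero]
  have hq_supp : volume (Function.support q) ≠ 0 := by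
    intro h0
    apply hne
    rw [Filter.eventuallyEq_iff_exists_mem]
    exact ⟨(Function.support q)ᶜ, by rwa [mem_ae_iff, compl_compl],
      fun y hy => by simpa [Function.mem_support, not_not] using hy⟩
  rw [hsupp, Measure.addHaar_preimage_smul volume (inv_ne_zero ht), pos_iff_ne_zero]
  refine mul_ne_zero ?_ hq_supp
  simp only [ne_eq, ENNReal.ofReal_eq_zero, not_le]
  positivity

lemma my_gauss_deriv {σ : ℝ} (hσ : σ ≠ 0) (y x : EuclideanSpace ℝ (Fin d)) :
    HasFDerivAt (fun x : EuclideanSpace ℝ (Fin d) =>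
        Real.exp (-‖y - x‖ ^ 2 / (2 * σ ^ 2)))
      ((Real.exp (-‖y - x‖ ^ 2 / (2 * σ ^ 2)) * (σ ^ 2)⁻¹) •
        innerSL ℝ (y - x)) x := by
  simp only [← real_inner_self_eq_norm_sq]
  have hf : HasFDerivAt (fun x : EuclideanSpace ℝ (Fin d) => y - x)
      (-(ContinuousLinearMap.id ℝ (EuclideanSpace ℝ (Fin d)))) x :=
    (hasFDerivAt_id x).const_sub y
  have h1 := hf.inner ℝ hf
  have h2 : HasFDerivAt (fun x : EuclideanSpace ℝ (Fin d) =>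
      -(⟪y - x, y - x⟫ : ℝ) / (2 * σ ^ 2)) ((σ ^ 2)⁻¹ • innerSL ℝ (y - x)) x := by
    have h3 := h1.const_mul ((-(2 * σ ^ 2))⁻¹)
    have heq : (fun x : EuclideanSpace ℝ (Fin d) =>
        -(⟪y - x, y - x⟫ : ℝ) / (2 * σ ^ 2)) =
        fun x => (-(2 * σ ^ 2))⁻¹ * ⟪y - x, y - x⟫ := by
      funext z; rw [inv_neg]; ring
    rw [heq]
    refine h3.congr_fderiv ?_
    symm
    ext h
    simp only [ContinuousLinearMap.smul_apply, innerSL_apply_apply,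
      ContinuousLinearMap.coe_smul', Pi.smul_apply, smul_eq_mul,
      ContinuousLinearMap.coe_comp', Function.comp_apply,
      fderivInnerCLM_apply, ContinuousLinearMap.prod_apply,
      ContinuousLinearMap.neg_apply, ContinuousLinearMap.coe_id', id_eq,
      inner_neg_neg, inner_neg_left, inner_neg_right]
    rw [inv_neg, real_inner_comm]
    field_simp
    ring
  have h4 := h2.exp
  rwa [smul_smul] at h4

lemma my_integrable' (c : EuclideanSpace ℝ (Fin d) → ℝ) (hc : Integrable c)
    (σ : ℝ) (x : EuclideanSpace ℝ (Fin d)) :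
    Integrable (fun y => c y * Real.exp (-‖y - x‖ ^ 2 / (2 * σ ^ 2))) := by
  have hcont : Continuous fun y : EuclideanSpace ℝ (Fin d) =>
      Real.exp (-‖y - x‖ ^ 2 / (2 * σ ^ 2)) := by fun_prop
  have hb : ∃ C, ∀ y : EuclideanSpace ℝ (Fin d),
      ‖Real.exp (-‖y - x‖ ^ 2 / (2 * σ ^ 2))‖ ≤ C := by
    refine ⟨1, fun y => ?_⟩
    rw [Real.norm_eq_abs, abs_of_pos (Real.exp_pos _)]
    apply Real.exp_le_one_iff.2
    apply div_nonpos_of_nonpos_of_nonneg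
    · simp [sq_nonneg]
    · positivity
  exact (Integrable.bdd_mul hc hcont.aestronglyMeasurable (Filter.Eventually.of_forall hb.choose_spec)).congr
    (Filter.Eventually.of_forall fun y => mul_comm _ _)

lemma my_diff (c : EuclideanSpace ℝ (Fin d) → ℝ) (hc : Integrable c)
    (hc_nonneg : ∀ y, 0 ≤ c y) {σ : ℝ} (hσ : 0 < σ) (x : EuclideanSpace ℝ (Fin d)) :
    DifferentiableAt ℝ
      (fun x : EuclideanSpace ℝ (Fin d) =>
        ∫ y, c y * Real.exp (-‖y - x‖ ^ 2 / (2 * σ ^ 2))) x := by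
  set F' : EuclideanSpace ℝ (Fin d) → EuclideanSpace ℝ (Fin d) →
      (EuclideanSpace ℝ (Fin d) →L[ℝ] ℝ) := fun x y =>
    (c y * Real.exp (-‖y - x‖ ^ 2 / (2 * σ ^ 2)) * (σ ^ 2)⁻¹) • innerSL ℝ (y - x)
    with hF'
  have h := hasFDerivAt_integral_of_dominated_of_fderiv_le
    (F := fun x y => c y * Real.exp (-‖y - x‖ ^ 2 / (2 * σ ^ 2)))
    (μ := volume) (F' := F') (x₀ := x) (bound := fun y => c y * σ⁻¹) (Metric.ball_mem_nhds x one_pos)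
    ?_ ?_ ?_ ?_ ?_ ?_
  · exact h.differentiableAt
  · refine Filter.Eventually.of_forall fun x' => ?_
    exact hc.aestronglyMeasurable.mul (by fun_prop : Continuous fun y :
      EuclideanSpace ℝ (Fin d) => Real.exp (-‖y - x'‖ ^ 2 / (2 * σ ^ 2))).aestronglyMeasurable
  · exact my_integrable' c hc σ x
  · refine AEStronglyMeasurable.smul (f := fun y => c y * Real.exp (-‖y - x‖ ^ 2 / (2 * σ ^ 2)) * (σ ^ 2)⁻¹)
      (g := fun y => innerSL ℝ (y - x)) ?_ ?_
    · exact (hc.aestronglyMeasurable.mul (by fun_prop : Continuous fun y :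
        EuclideanSpace ℝ (Fin d) =>
          Real.exp (-‖y - x‖ ^ 2 / (2 * σ ^ 2))).aestronglyMeasurable).mul_const _
    · exact ((innerSL ℝ).continuous.comp
        (continuous_id.sub continuous_const)).aestronglyMeasurable
  · refine Filter.Eventually.of_forall fun y => fun x' _ => ?_
    simp only [hF']
    have hcy := hc_nonneg y
    have hexp := (Real.exp_pos (-‖y - x'‖ ^ 2 / (2 * σ ^ 2))).le
    refine ContinuousLinearMap.opNorm_le_bound _ (by positivity) fun h => ?_
    have hg := my_gauss_le hσ (norm_nonneg (y - x'))
    have hcs := abs_real_inner_le_norm (y - x') h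
    have ha : (0:ℝ) ≤ c y * Real.exp (-‖y - x'‖ ^ 2 / (2 * σ ^ 2)) * (σ ^ 2)⁻¹ := by
      positivity
    calc ‖((c y * Real.exp (-‖y - x'‖ ^ 2 / (2 * σ ^ 2)) * (σ ^ 2)⁻¹) •
            (innerSL ℝ) (y - x')) h‖
        = (c y * Real.exp (-‖y - x'‖ ^ 2 / (2 * σ ^ 2)) * (σ ^ 2)⁻¹) * |⟪y - x', h⟫| := by
          simp only [ContinuousLinearMap.smul_apply, innerSL_apply_apply, smul_eq_mul,
            Real.norm_eq_abs, abs_mul, abs_of_nonneg ha]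
      _ ≤ (c y * Real.exp (-‖y - x'‖ ^ 2 / (2 * σ ^ 2)) * (σ ^ 2)⁻¹) * (‖y - x'‖ * ‖h‖) :=
          mul_le_mul_of_nonneg_left hcs ha
      _ = (c y * (σ ^ 2)⁻¹ * ‖h‖) * (‖y - x'‖ * Real.exp (-‖y - x'‖ ^ 2 / (2 * σ ^ 2))) := by
          ring
      _ ≤ (c y * (σ ^ 2)⁻¹ * ‖h‖) * σ := mul_le_mul_of_nonneg_left hg (by positivity)
      _ = c y * σ⁻¹ * ‖h‖ := by rw [sq]; field_simp
  · exact (hc.mul_const _)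
  · refine Filter.Eventually.of_forall fun y => fun x' _ => ?_
    have hd := (my_gauss_deriv hσ.ne' y x').const_mul (c y)
    simp only [hF']
    refine hd.congr_fderiv ?_
    symm
    rw [smul_smul, ← mul_assoc]


theorem stmt0 (d : ℕ) (p : EuclideanSpace ℝ (Fin d) → ℝ)
    (v : EuclideanSpace ℝ (Fin d))
    (hp_nonneg : ∀ x, 0 ≤ p x) (hp_int : ∫ x, p x = 1)
    (hp_tilt : Integrable (fun x => p x * Real.exp ⟪x, v⟫))
    (σ : ℝ) (hσ : σ ∈ Set.Ioo (0 : ℝ) 1) (x : EuclideanSpace ℝ (Fin d)) :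
    gradient (fun y => Real.log (noised d (tilt d p v) σ y)) x =
      (Real.sqrt (1 - σ ^ 2))⁻¹ • v +
        gradient (fun y => Real.log (noised d p σ y))
          (x + (σ ^ 2 / Real.sqrt (1 - σ ^ 2)) • v) := by
  obtain ⟨hσ0, hσ1⟩ := hσ
  have h1σ : (0:ℝ) < 1 - σ ^ 2 := by nlinarith
  set t := Real.sqrt (1 - σ ^ 2) with htdef
  have ht : 0 < t := Real.sqrt_pos.2 h1σ
  have ht2 : t ^ 2 = 1 - σ ^ 2 := Real.sq_sqrt h1σ.le
  set C := ∫ y, p y * Real.exp ⟪y, v⟫ with hCdef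
  set a := (σ ^ 2 / t) • v with hadef
  set K := σ ^ 2 * ‖v‖ ^ 2 / (2 * t ^ 2) with hKdef
  have hp_intg : Integrable p := integrable_of_integral_eq_one hp_int
  have hp_ne : ¬ p =ᵐ[volume] (0 : EuclideanSpace ℝ (Fin d) → ℝ) := by
    intro h
    rw [integral_congr_ae h] at hp_int
    simpa using hp_int
  have hC : 0 < C := by
    rw [hCdef, integral_pos_iff_support_of_nonneg
      (fun y => mul_nonneg (hp_nonneg y) (Real.exp_pos _).le) hp_tilt]
    have hs : (Function.support fun y => p y * Real.exp ⟪y, v⟫) = Function.support p := by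
      ext y; simp [Function.mem_support, Real.exp_ne_zero]
    rw [hs, pos_iff_ne_zero]
    intro h0
    apply hp_ne
    rw [Filter.eventuallyEq_iff_exists_mem]
    exact ⟨(Function.support p)ᶜ, by rwa [mem_ae_iff, compl_compl],
      fun y hy => by simpa [Function.mem_support, not_not] using hy⟩
  have hc₀ : 0 < (2 * Real.pi * σ ^ 2) ^ (-(d : ℝ) / 2) * t ^ (-(d : ℝ)) := by
    apply mul_pos
    · apply Real.rpow_pos_of_pos
      have := Real.pi_pos
      positivity
    · exact Real.rpow_pos_of_pos ht _
  -- facts about tilt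
  have htilt_nonneg : ∀ w, 0 ≤ tilt d p v w := by
    intro w
    simp only [tilt]
    rw [← hCdef]
    exact div_nonneg (mul_nonneg (hp_nonneg w) (Real.exp_pos _).le) hC.le
  have htilt_int : Integrable (tilt d p v) := by
    unfold tilt
    exact hp_tilt.div_const _
  have htilt_ne : ¬ (tilt d p v) =ᵐ[volume] (0 : EuclideanSpace ℝ (Fin d) → ℝ) := by
    intro h
    have h2 : (fun y => p y * Real.exp ⟪y, v⟫) =ᵐ[volume]
        (0 : EuclideanSpace ℝ (Fin d) → ℝ) := by
      filter_upwards [h] with w hw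
      simp only [tilt, ← hCdef, Pi.zero_apply, div_eq_zero_iff] at hw
      rcases hw with hw | hw
      · exact hw
      · exact absurd hw hC.ne'
    rw [hCdef, integral_congr_ae h2] at hC
    simpa using hC
  -- positivity of the noised densities
  have hnp : ∀ w, 0 < noised d p σ w := by
    intro w
    simp only [noised, ← htdef]
    exact mul_pos hc₀ (my_pos p hp_nonneg hp_intg hp_ne ht.ne' σ w)
  have hntilt : ∀ w, 0 < noised d (tilt d p v) σ w := by
    intro w
    simp only [noised, ← htdef]
    exact mul_pos hc₀ (my_pos _ htilt_nonneg htilt_int htilt_ne ht.ne' σ w)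
  -- key pointwise identity
  have hpoint : ∀ y z : EuclideanSpace ℝ (Fin d),
      tilt d p v (t⁻¹ • z) * Real.exp (-‖z - y‖ ^ 2 / (2 * σ ^ 2)) =
        (Real.exp K / C * Real.exp (t⁻¹ * ⟪y, v⟫)) *
          (p (t⁻¹ • z) * Real.exp (-‖z - (y + a)‖ ^ 2 / (2 * σ ^ 2))) := by
    intro y z
    simp only [tilt]
    rw [← hCdef, real_inner_smul_left]
    have hsub : z - (y + a) = (z - y) - a := by abel
    have hnorm : ‖z - (y + a)‖ ^ 2 =
        ‖z - y‖ ^ 2 - 2 * ((σ ^ 2 / t) * (⟪z, v⟫ - ⟪y, v⟫)) + (σ ^ 2 / t) ^ 2 * ‖v‖ ^ 2 := by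
      rw [hsub, hadef, norm_sub_sq_real, real_inner_smul_right, inner_sub_left, norm_smul,
        mul_pow, Real.norm_eq_abs, sq_abs]
    have e1 : p (t⁻¹ • z) * Real.exp (t⁻¹ * ⟪z, v⟫) / C *
        Real.exp (-‖z - y‖ ^ 2 / (2 * σ ^ 2)) =
        p (t⁻¹ • z) / C * Real.exp (t⁻¹ * ⟪z, v⟫ + -‖z - y‖ ^ 2 / (2 * σ ^ 2)) := by
      rw [Real.exp_add]; ring
    have e2 : (Real.exp K / C * Real.exp (t⁻¹ * ⟪y, v⟫)) *
        (p (t⁻¹ • z) * Real.exp (-‖z - (y + a)‖ ^ 2 / (2 * σ ^ 2))) =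
        p (t⁻¹ • z) / C *
          Real.exp (K + t⁻¹ * ⟪y, v⟫ + -‖z - (y + a)‖ ^ 2 / (2 * σ ^ 2)) := by
      rw [Real.exp_add, Real.exp_add]; ring
    rw [e1, e2]
    congr 1
    rw [hnorm, hKdef]
    field_simp
    congr 1
    field_simp
    ring
  -- the key identity for the noised densities
  have hkey : ∀ y, noised d (tilt d p v) σ y =
      (Real.exp K / C * Real.exp (t⁻¹ * ⟪y, v⟫)) * noised d p σ (y + a) := by
    intro y
    simp only [noised, ← htdef]
    rw [show (fun z => tilt d p v (t⁻¹ • z) * Real.exp (-‖z - y‖ ^ 2 / (2 * σ ^ 2))) =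
        fun z => (Real.exp K / C * Real.exp (t⁻¹ * ⟪y, v⟫)) *
          (p (t⁻¹ • z) * Real.exp (-‖z - (y + a)‖ ^ 2 / (2 * σ ^ 2))) from
      funext (hpoint y)]
    rw [integral_const_mul]
    ring
  -- the log identity
  have hlog : (fun y => Real.log (noised d (tilt d p v) σ y)) =
      fun y => (K - Real.log C) + ⟪y, t⁻¹ • v⟫ +
        Real.log (noised d p σ (y + a)) := by
    funext y
    rw [hkey y, Real.log_mul (by positivity) (hnp _).ne',
      Real.log_mul (by positivity) (Real.exp_ne_zero _),
      Real.log_div (Real.exp_ne_zero _) hC.ne', Real.log_exp, Real.log_exp,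
      real_inner_smul_right]
  -- differentiability of log (noised p)
  have hgd : ∀ w, DifferentiableAt ℝ (fun y => Real.log (noised d p σ y)) w := by
    intro w
    have hint : Integrable (fun z : EuclideanSpace ℝ (Fin d) => p (t⁻¹ • z)) :=
      (integrable_comp_smul_iff volume p (inv_ne_zero ht.ne')).2 hp_intg
    have hdiff := (my_diff (fun z => p (t⁻¹ • z)) hint (fun z => hp_nonneg _) hσ0 w).const_mul
      ((2 * Real.pi * σ ^ 2) ^ (-(d : ℝ) / 2) * t ^ (-(d : ℝ)))
    refine DifferentiableAt.log ?_ (hnp w).ne'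
    have hnoised_eq : noised d p σ = fun x => (2 * Real.pi * σ ^ 2) ^ (-(d : ℝ) / 2) *
        t ^ (-(d : ℝ)) * ∫ y, p (t⁻¹ • y) * Real.exp (-‖y - x‖ ^ 2 / (2 * σ ^ 2)) := by
      funext w
      simp only [noised, ← htdef]
    rw [hnoised_eq]
    exact hdiff
  -- gradient of the inner product part
  have hinner : HasGradientAt (fun y : EuclideanSpace ℝ (Fin d) => (⟪y, t⁻¹ • v⟫ : ℝ))
      (t⁻¹ • v) x := by
    rw [hasGradientAt_iff_hasFDerivAt]
    have hfun : (fun y : EuclideanSpace ℝ (Fin d) => (⟪y, t⁻¹ • v⟫ : ℝ)) =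
        fun y => (innerSL ℝ (t⁻¹ • v)) y := funext fun y => real_inner_comm _ _
    rw [hfun]
    have h := (innerSL ℝ (t⁻¹ • v)).hasFDerivAt (x := x)
    refine h.congr_fderiv ?_
    ext w
    rfl
  -- gradient of the shifted part
  have hF2 : HasFDerivAt (fun y : EuclideanSpace ℝ (Fin d) =>
      Real.log (noised d p σ (y + a)))
      (InnerProductSpace.toDual ℝ _ (gradient (fun y => Real.log (noised d p σ y)) (x + a))) x := by
    have hG := (hgd (x + a)).hasGradientAt
    have hcomp := hG.hasFDerivAt.comp x ((hasFDerivAt_id x).add_const a)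
    rw [ContinuousLinearMap.comp_id] at hcomp
    exact hcomp
  -- total
  have htot : HasFDerivAt (fun y : EuclideanSpace ℝ (Fin d) =>
      (K - Real.log C) + ⟪y, t⁻¹ • v⟫ + Real.log (noised d p σ (y + a)))
      (InnerProductSpace.toDual ℝ _
        (t⁻¹ • v + gradient (fun y => Real.log (noised d p σ y)) (x + a))) x := by
    have h0 : HasFDerivAt (fun _ : EuclideanSpace ℝ (Fin d) => (K - Real.log C))
        (0 : EuclideanSpace ℝ (Fin d) →L[ℝ] ℝ) x := hasFDerivAt_const _ _
    have hsum := (h0.add hinner.hasFDerivAt).add hF2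
    rw [map_add]
    refine hsum.congr_fderiv ?_
    symm
    rw [zero_add]
  have hfinal : HasGradientAt (fun y : EuclideanSpace ℝ (Fin d) =>
      (K - Real.log C) + ⟪y, t⁻¹ • v⟫ + Real.log (noised d p σ (y + a)))
      (t⁻¹ • v + gradient (fun y => Real.log (noised d p σ y)) (x + a)) x := htot
  rw [hlog]
  exact hfinal.gradient
end

section
/- Let p be a probability density on ℝ^d, v ∈ ℝ^d, and σ ∈ (0,1) with t := √(1−σ²). Then the noised tilted density satisfies the identity (p_v)_σ(x) = C · exp(⟨t^{−1}x, v⟩) · p_σ(x + t^{−1}σ²v) for some normalization constant C > 0 independent of x, where p_v(x) ∝ p(x)exp(⟨x,v⟩). -/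
open MeasureTheory
open scoped RealInnerProductSpace

theorem stmt1 (d : ℕ) (p : EuclideanSpace ℝ (Fin d) → ℝ)
    (v : EuclideanSpace ℝ (Fin d))
    (hp_nonneg : ∀ x, 0 ≤ p x) (hp_int : ∫ x, p x = 1)
    (hp_tilt : Integrable (fun x => p x * Real.exp ⟪x, v⟫))
    (σ : ℝ) (hσ : σ ∈ Set.Ioo (0 : ℝ) 1) :
    ∃ C : ℝ, 0 < C ∧ ∀ x : EuclideanSpace ℝ (Fin d),
      noised d (tilt d p v) σ x =
        C * Real.exp ⟪(Real.sqrt (1 - σ ^ 2))⁻¹ • x, v⟫ *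
          noised d p σ (x + ((Real.sqrt (1 - σ ^ 2))⁻¹ * σ ^ 2) • v) := by
  obtain ⟨hσ0, hσ1⟩ := hσ
  have ht2 : (0:ℝ) < 1 - σ ^ 2 := by nlinarith
  have hpInt : Integrable p := by
    by_contra h
    rw [integral_undef h] at hp_int
    norm_num at hp_int
  have hps : 0 < MeasureTheory.volume (Function.support p) := by
    have := (integral_pos_iff_support_of_nonneg hp_nonneg hpInt).mp
      (by rw [hp_int]; norm_num)
    exact this
  have hZ : 0 < ∫ y, p y * Real.exp ⟪y, v⟫ := by
    refine (integral_pos_iff_support_of_nonneg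
      (fun y => mul_nonneg (hp_nonneg y) (Real.exp_pos _).le) hp_tilt).mpr ?_
    have hsupp : (Function.support fun y => p y * Real.exp ⟪y, v⟫)
        = Function.support p := by
      ext y
      simp [Function.mem_support, Real.exp_ne_zero]
    rw [hsupp]
    exact hps
  set t : ℝ := Real.sqrt (1 - σ ^ 2) with htdef
  have ht : 0 < t := Real.sqrt_pos.mpr ht2
  have htsq : t ^ 2 = 1 - σ ^ 2 := Real.sq_sqrt ht2.le
  set Z : ℝ := ∫ y, p y * Real.exp ⟪y, v⟫ with hZdef
  refine ⟨Real.exp (σ ^ 2 * ‖v‖ ^ 2 / (2 * t ^ 2)) / Z, by positivity, fun x => ?_⟩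
  simp only [noised, tilt, ← htdef, ← hZdef]
  have key : ∀ y : EuclideanSpace ℝ (Fin d),
      p (t⁻¹ • y) * Real.exp ⟪t⁻¹ • y, v⟫ / Z * Real.exp (-‖y - x‖ ^ 2 / (2 * σ ^ 2))
        = (Real.exp (σ ^ 2 * ‖v‖ ^ 2 / (2 * t ^ 2)) / Z * Real.exp ⟪t⁻¹ • x, v⟫) *
          (p (t⁻¹ • y) *
            Real.exp (-‖y - (x + (t⁻¹ * σ ^ 2) • v)‖ ^ 2 / (2 * σ ^ 2))) := by
    intro y
    have hexp : Real.exp ⟪t⁻¹ • y, v⟫ * Real.exp (-‖y - x‖ ^ 2 / (2 * σ ^ 2))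
        = Real.exp (σ ^ 2 * ‖v‖ ^ 2 / (2 * t ^ 2)) * Real.exp ⟪t⁻¹ • x, v⟫ *
          Real.exp (-‖y - (x + (t⁻¹ * σ ^ 2) • v)‖ ^ 2 / (2 * σ ^ 2)) := by
      rw [← Real.exp_add, ← Real.exp_add, ← Real.exp_add]
      congr 1
      have h1 : ⟪t⁻¹ • y, v⟫ = t⁻¹ * ⟪y, v⟫ := real_inner_smul_left _ _ _
      have h2 : ⟪t⁻¹ • x, v⟫ = t⁻¹ * ⟪x, v⟫ := real_inner_smul_left _ _ _
      have h3 : ‖y - (x + (t⁻¹ * σ ^ 2) • v)‖ ^ 2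
          = ‖y - x‖ ^ 2 - 2 * ((t⁻¹ * σ ^ 2) * (⟪y, v⟫ - ⟪x, v⟫))
            + (t⁻¹ * σ ^ 2) ^ 2 * ‖v‖ ^ 2 := by
        have hyx : y - (x + (t⁻¹ * σ ^ 2) • v) = (y - x) - (t⁻¹ * σ ^ 2) • v := by
          abel
        rw [hyx, norm_sub_sq_real, real_inner_smul_right, inner_sub_left,
          norm_smul, mul_pow, Real.norm_eq_abs, sq_abs]
      rw [h1, h2, h3]
      field_simp
      ring
    rw [div_mul_eq_mul_div, mul_assoc, hexp]
    field_simp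
  rw [show (∫ y, p (t⁻¹ • y) * Real.exp ⟪t⁻¹ • y, v⟫ / Z *
        Real.exp (-‖y - x‖ ^ 2 / (2 * σ ^ 2)))
      = (Real.exp (σ ^ 2 * ‖v‖ ^ 2 / (2 * t ^ 2)) / Z * Real.exp ⟪t⁻¹ • x, v⟫) *
        ∫ y, p (t⁻¹ • y) *
          Real.exp (-‖y - (x + (t⁻¹ * σ ^ 2) • v)‖ ^ 2 / (2 * σ ^ 2)) by
    rw [← integral_const_mul]
    exact integral_congr_ae (Filter.Eventually.of_forall key)]
  ring
end
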